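/- For n ≥ 2, the natural restriction map from Schwartz functions on ℝ^n to the dual of distributions supported at the origin fits into an exact sequence: the space of Schwartz functions on ℝ^n vanishing to infinite order at 0 (equivalently, Schwartz functions of ℝ^n \ {0} extended by zero) is precisely the kernel of the map S(ℝ^n) → ∏_{I ∈ ℕ^n} ℂ, φ ↦ ((∂^I φ)(0))_I. -/

import Mathlib

open SchwartzMap

/-- The iterated partial-derivative operator `∂^I` on Schwartz functions on `ℝ^n`. -/
noncomputable def partialMulti (n : ℕ) (I : Fin n → ℕ) :
    𝓢((Fin n → ℝ), ℂ) →L[ℂ] 𝓢((Fin n → ℝ), ℂ) :=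
  (List.ofFn fun i : Fin n => (LineDeriv.lineDerivOpCLM ℂ 𝓢((Fin n → ℝ), ℂ) (Pi.single i 1 : Fin n → ℝ)) ^ (I i)).prod

/-- The linear map `S(ℝ^n) → ∏_{I ∈ ℕ^n} ℂ`, `φ ↦ ((∂^I φ)(0))_I`. -/
noncomputable def derivsAtZero (n : ℕ) : 𝓢((Fin n → ℝ), ℂ) →ₗ[ℂ] ((Fin n → ℕ) → ℂ) where
  toFun φ := fun I => (partialMulti n I φ) 0
  map_add' φ ψ := by funext I; simp
  map_smul' c φ := by funext I; simp

section Aux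

variable {n : ℕ}

/-- Symmetry of second derivatives: directional derivative operators commute. -/
lemma pderiv_comm (m m' : Fin n → ℝ) (φ : 𝓢((Fin n → ℝ), ℂ)) :
    LineDeriv.lineDerivOpCLM ℂ 𝓢((Fin n → ℝ), ℂ) m (LineDeriv.lineDerivOpCLM ℂ 𝓢((Fin n → ℝ), ℂ) m' φ) = LineDeriv.lineDerivOpCLM ℂ 𝓢((Fin n → ℝ), ℂ) m' (LineDeriv.lineDerivOpCLM ℂ 𝓢((Fin n → ℝ), ℂ) m φ) := by
  ext x
  have hsym : IsSymmSndFDerivAt ℝ (⇑φ) x :=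
    (φ.smooth 2).contDiffAt.isSymmSndFDerivAt (by simp)
  have hd : DifferentiableAt ℝ (fderiv ℝ (⇑φ)) x :=
    ((φ.smooth 2).fderiv_right (m := 1) (by norm_num)).differentiable one_ne_zero x
  have key : ∀ v w : Fin n → ℝ,
      fderiv ℝ (fun y => fderiv ℝ (⇑φ) y w) x v = fderiv ℝ (fderiv ℝ (⇑φ)) x v w := by
    intro v w
    have := fderiv_clm_apply (c := fderiv ℝ (⇑φ)) (u := fun _ => w) hd
      (differentiableAt_const w)
    rw [show (fun y => fderiv ℝ (⇑φ) y w) = fun y => (fderiv ℝ (⇑φ) y) ((fun _ => w) y) from rfl,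
      this]
    simp
  have h1 : LineDeriv.lineDerivOpCLM ℂ 𝓢((Fin n → ℝ), ℂ) m (LineDeriv.lineDerivOpCLM ℂ 𝓢((Fin n → ℝ), ℂ) m' φ) x
      = fderiv ℝ (fun y => fderiv ℝ (⇑φ) y m') x m := rfl
  have h2 : LineDeriv.lineDerivOpCLM ℂ 𝓢((Fin n → ℝ), ℂ) m' (LineDeriv.lineDerivOpCLM ℂ 𝓢((Fin n → ℝ), ℂ) m φ) x
      = fderiv ℝ (fun y => fderiv ℝ (⇑φ) y m) x m' := rfl
  rw [h1, h2, key, key, hsym m m']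

lemma commute_pderiv (m m' : Fin n → ℝ) :
    Commute (LineDeriv.lineDerivOpCLM ℂ 𝓢((Fin n → ℝ), ℂ) m) (LineDeriv.lineDerivOpCLM ℂ 𝓢((Fin n → ℝ), ℂ) m') := by
  ext φ x
  exact congrFun (congrArg DFunLike.coe (pderiv_comm m m' φ)) x

lemma pairwise_of_forall {α : Type*} {R : α → α → Prop} (h : ∀ a b, R a b) :
    ∀ l : List α, l.Pairwise R
  | [] => .nil
  | a :: t => .cons (fun b _ => h a b) (pairwise_of_forall h t)

/-- The product of directional derivative operators indexed by a list. -/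
noncomputable def Qop (n : ℕ) (l : List (Fin n)) :
    𝓢((Fin n → ℝ), ℂ) →L[ℂ] 𝓢((Fin n → ℝ), ℂ) :=
  (l.map fun i => LineDeriv.lineDerivOpCLM ℂ 𝓢((Fin n → ℝ), ℂ) (Pi.single i 1 : Fin n → ℝ)).prod

lemma Qop_perm {l l' : List (Fin n)} (h : l.Perm l') : Qop n l = Qop n l' :=
  (h.map _).prod_eq' <| List.pairwise_map.2 <|
    pairwise_of_forall (fun a b => commute_pderiv _ _) l

lemma Qop_ofFn {k : ℕ} (v : Fin k → Fin n) (φ : 𝓢((Fin n → ℝ), ℂ)) :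
    Qop n (List.ofFn v) φ = LineDeriv.iteratedLineDerivOp (fun j => (Pi.single (v j) 1 : Fin n → ℝ)) φ := by
  induction k with
  | zero => simp [Qop]
  | succ k ih =>
    rw [List.ofFn_succ]
    have : Qop n (v 0 :: List.ofFn fun i => v i.succ)
        = LineDeriv.lineDerivOpCLM ℂ 𝓢((Fin n → ℝ), ℂ) (Pi.single (v 0) 1 : Fin n → ℝ) * Qop n (List.ofFn fun i => v i.succ) := by
      simp [Qop]
    rw [this, ContinuousLinearMap.mul_apply, ih (fun i => v i.succ),
      LineDeriv.iteratedLineDerivOp_succ_left]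
    rfl

lemma Qop_eq_iteratedFDeriv {k : ℕ} (v : Fin k → Fin n) (φ : 𝓢((Fin n → ℝ), ℂ))
    (x : Fin n → ℝ) :
    Qop n (List.ofFn v) φ x = iteratedFDeriv ℝ k (⇑φ) x (fun j => Pi.single (v j) 1) := by
  rw [Qop_ofFn, SchwartzMap.iteratedLineDerivOp_eq_iteratedFDeriv]

lemma partialMulti_eq_Qop (I : Fin n → ℕ) :
    partialMulti n I = Qop n (List.ofFn fun i => List.replicate (I i) i).flatten := by
  simp [partialMulti, Qop, List.map_flatten, List.map_ofFn, Function.comp_def,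
    List.prod_flatten, List.map_replicate, List.prod_replicate]

lemma perm_canonical {k : ℕ} (v : Fin k → Fin n) :
    (List.ofFn v).Perm
      (List.ofFn fun i => List.replicate ((List.ofFn v).count i) i).flatten := by
  classical
  rw [List.perm_iff_count]
  intro a
  rw [List.count_flatten]
  simp only [List.map_ofFn, Function.comp_def, List.count_replicate]
  rw [List.sum_ofFn]
  simp [Finset.sum_ite_eq]

end Aux

/-- A Schwartz function `φ` on `ℝ^n` (`n ≥ 2`) vanishes to infinite order at `0`
(equivalently, restricts to a Schwartz function on `ℝ^n \ {0}`) iff it lies in the kernel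
of `φ ↦ ((∂^I φ)(0))_I`, i.e. iff all iterated derivatives of `φ` vanish at `0`. -/
theorem stmt15 (n : ℕ) (hn : 2 ≤ n) :
    LinearMap.ker (derivsAtZero n)
      = {φ : 𝓢((Fin n → ℝ), ℂ) | ∀ k : ℕ, iteratedFDeriv ℝ k (⇑φ) (0 : Fin n → ℝ) = 0} := by
  ext φ
  simp only [LinearMap.mem_ker, Set.mem_setOf_eq]
  constructor
  · intro h k
    have h' : ∀ I : Fin n → ℕ, partialMulti n I φ 0 = 0 := fun I => congrFun h I
    apply ContinuousMultilinearMap.toMultilinearMap_injective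
    apply Module.Basis.ext_multilinear (fun _ => Pi.basisFun ℝ (Fin n))
    intro v
    have hb : (fun j : Fin k => (Pi.basisFun ℝ (Fin n)) (v j))
        = fun j : Fin k => Pi.single (v j) (1 : ℝ) := by
      funext j; simp [Pi.basisFun_apply]
    show iteratedFDeriv ℝ k (⇑φ) 0 (fun j => (Pi.basisFun ℝ (Fin n)) (v j)) = 0
    rw [hb, ← Qop_eq_iteratedFDeriv, Qop_perm (perm_canonical v), ← partialMulti_eq_Qop]
    exact h' _
  · intro h
    funext I
    show partialMulti n I φ 0 = 0
    rw [partialMulti_eq_Qop]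
    set l := (List.ofFn fun i => List.replicate (I i) i).flatten with hl
    rw [← List.ofFn_get l, Qop_eq_iteratedFDeriv, h l.length]
    rfl
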